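/- Let γ, ω > 0 and consider a solution of the auxiliary system with z(t) = √(r_x(t)² + R(t)²) ≤ 1. Then for any measurable control θ(t), the function z satisfies the differential inequalities -γ(z + 1) ≤ dz/dt ≤ γ(1 - z) wherever z > 0. -/

import Mathlib

open Real Set

/-- Along any solution of the auxiliary system inside the unit disk, the radius
`z = √(r_x² + R²)` satisfies the differential inequalities
`-γ(z+1) ≤ ż ≤ γ(1-z)` wherever `z > 0`. -/
theorem radius_differential_inequalities (γ ω : ℝ) (hγ : 0 < γ) (hω : 0 < ω)
    (θ rx R : ℝ → ℝ) (hθ : Measurable θ)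
    (hdisk : ∀ t, rx t ^ 2 + R t ^ 2 ≤ 1)
    (hrx : ∀ t, HasDerivAt rx (-(γ/2) * rx t - ω * R t * Real.cos (θ t)) t)
    (hR : ∀ t, HasDerivAt R (ω * rx t * Real.cos (θ t)
      - (γ/2) * R t * (1 + Real.sin (θ t)^2) + γ * Real.sin (θ t)) t)
    (z : ℝ → ℝ) (hz : ∀ t, z t = Real.sqrt (rx t ^ 2 + R t ^ 2)) :
    ∀ t, 0 < z t →
      ∃ d : ℝ, HasDerivAt z d t ∧ -γ * (z t + 1) ≤ d ∧ d ≤ γ * (1 - z t) := by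
  intro t hzt
  set a := rx t with ha
  set b := R t with hb
  set s := Real.sin (θ t) with hs
  set c := Real.cos (θ t) with hc
  set z0 := z t with hz0
  have hzval : z0 = Real.sqrt (a ^ 2 + b ^ 2) := hz t
  have hSnn : (0:ℝ) ≤ a ^ 2 + b ^ 2 := by positivity
  have hz0nn : 0 ≤ z0 := hzval ▸ Real.sqrt_nonneg _
  have hz0sq : z0 ^ 2 = a ^ 2 + b ^ 2 := by
    rw [hzval, Real.sq_sqrt hSnn]
  have hSpos : 0 < a ^ 2 + b ^ 2 := by nlinarith
  -- derivative of S = rx^2 + R^2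
  have hS : HasDerivAt (fun u => rx u ^ 2 + R u ^ 2)
      (2 * a * (-(γ/2) * a - ω * b * c) +
       2 * b * (ω * a * c - (γ/2) * b * (1 + s^2) + γ * s)) t := by
    have h1 := ((hrx t).pow 2)
    have h2 := ((hR t).pow 2)
    have := h1.add h2
    refine this.congr_deriv ?_
    push_cast
    ring
  have hsqrt : HasDerivAt Real.sqrt (1 / (2 * Real.sqrt (a ^ 2 + b ^ 2)))
      (a ^ 2 + b ^ 2) := Real.hasDerivAt_sqrt (ne_of_gt hSpos)
  have hzd : HasDerivAt z
      ((1 / (2 * z0)) *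
       (2 * a * (-(γ/2) * a - ω * b * c) +
        2 * b * (ω * a * c - (γ/2) * b * (1 + s^2) + γ * s))) t := by
    have hcomp := hsqrt.comp t hS
    have : z = fun u => Real.sqrt (rx u ^ 2 + R u ^ 2) := funext hz
    rw [this]
    refine hcomp.congr_deriv ?_
    rw [hzval]
  -- key inequalities
  have hbz : b ^ 2 ≤ z0 ^ 2 := by nlinarith
  have habs : -z0 ≤ b * s ∧ b * s ≤ z0 := by
    have h1 : |b * s| ≤ z0 := by
      rw [abs_mul]
      calc |b| * |s| ≤ z0 * 1 := by
            apply mul_le_mul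
            · rw [← Real.sqrt_sq_eq_abs]
              rw [← Real.sqrt_sq hz0nn]
              exact Real.sqrt_le_sqrt hbz
            · exact abs_sin_le_one _
            · positivity
            · exact hz0nn
        _ = z0 := mul_one z0
    exact abs_le.mp h1
  have hz1 : z0 ≤ 1 := by nlinarith [hdisk t]
  have hN : (1 / (2 * z0)) *
       (2 * a * (-(γ/2) * a - ω * b * c) +
        2 * b * (ω * a * c - (γ/2) * b * (1 + s^2) + γ * s))
      = (-(γ/2) * (a^2 + b^2) - (γ/2) * (b*s)^2 + γ * (b*s)) / z0 := by
    field_simp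
    ring
  refine ⟨_, hzd, ?_, ?_⟩
  · rw [hN, le_div_iff₀ hzt]
    nlinarith [habs.1, habs.2, hz0sq, mul_nonneg hγ.le (mul_nonneg (by linarith [habs.1] : (0:ℝ) ≤ z0 + b*s) (by nlinarith [habs.2] : (0:ℝ) ≤ z0 - b*s + 2))]
  · rw [hN, div_le_iff₀ hzt]
    nlinarith [mul_nonneg hγ.le (mul_nonneg (by linarith [habs.2] : (0:ℝ) ≤ z0 - b*s) (by nlinarith [habs.1] : (0:ℝ) ≤ 2 - z0 - b*s))]
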